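/- Let T be a finite nonempty tree, and let g* be the least integer g ≥ 1 for which T admits a g-site partition, i.e., a set of at most g vertices such that every vertex of T is at graph distance at most g from some vertex of the set (such a g exists). Then T can be burned in at most 2g* rounds, and T cannot be burned in fewer than g*−1 rounds; in particular the burning number b(T) satisfies g*−1 ≤ b(T) ≤ 2g*. -/

import Mathlib

/-- A burning schedule of length `m ≤ k` burns `G`: for every vertex `v` there is a
round `i` (`0`-indexed, corresponding to round `i+1`) whose activator `x i` reaches `v`
within distance `m - (i+1)`. -/
def BurnsIn {V : Type*} (G : SimpleGraph V) (k : ℕ) : Prop :=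
  ∃ m, m ≤ k ∧ ∃ x : Fin m → V, ∀ v : V, ∃ i : Fin m,
    G.Reachable (x i) v ∧ G.dist (x i) v ≤ m - (i.val + 1)

/-- The burning number of `G`: the least `k` such that `G` can be burned in `k` rounds. -/
noncomputable def burningNumber {V : Type*} (G : SimpleGraph V) : ℕ :=
  sInf {k | BurnsIn G k}

/-- A `g`-site partition of `T`: a set of at most `g` vertices (sites) such that every
vertex is at distance at most `g` from some site. -/
def HasSitePartition {V : Type*} (T : SimpleGraph V) (g : ℕ) : Prop :=
  ∃ S : Finset V, S.card ≤ g ∧ ∀ v : V, ∃ s ∈ S, T.dist s v ≤ g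

theorem stmt_7 {V : Type*} [Fintype V] (T : SimpleGraph V)
    (hconn : T.Connected) (hacyc : T.IsAcyclic)
    (gstar : ℕ) (h1 : 1 ≤ gstar) (hgstar : HasSitePartition T gstar)
    (hmin : ∀ g, 1 ≤ g → HasSitePartition T g → gstar ≤ g) :
    BurnsIn T (2 * gstar) ∧ ¬ BurnsIn T (gstar - 2) ∧
      gstar - 1 ≤ burningNumber T ∧ burningNumber T ≤ 2 * gstar := by
  classical
  have hne : Nonempty V := hconn.nonempty
  obtain ⟨v0⟩ := hne
  obtain ⟨S, hcard, hcov⟩ := hgstar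
  obtain ⟨s0, hs0, _⟩ := hcov v0
  have hburn : BurnsIn T (2 * gstar) := by
    refine ⟨2 * gstar, le_refl _, fun i => S.toList.getD i s0, fun v => ?_⟩
    obtain ⟨s, hs, hd⟩ := hcov v
    have hmem : s ∈ S.toList := Finset.mem_toList.mpr hs
    obtain ⟨⟨k, hklt⟩, hget⟩ := List.mem_iff_get.mp hmem
    have hlen : S.toList.length = S.card := Finset.length_toList S
    have hk2 : k < 2 * gstar := by omega
    refine ⟨⟨k, hk2⟩, ?_, ?_⟩
    · have hx : S.toList.getD k s0 = s := by
        exact (List.getD_eq_get _ _ ⟨k, hklt⟩).trans hget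
      simp only [hx]
      exact (hconn s v).symm.symm
    · have hx : S.toList.getD k s0 = s := by
        exact (List.getD_eq_get _ _ ⟨k, hklt⟩).trans hget
      simp only [hx]
      omega
  have hnot : ¬ BurnsIn T (gstar - 2) := by
    rintro ⟨m, hm, x, hx⟩
    rcases Nat.eq_zero_or_pos m with h0 | hpos
    · subst h0; obtain ⟨i, _⟩ := hx v0; exact i.elim0
    · have hpart : HasSitePartition T (gstar - 2) := by
        refine ⟨Finset.image x Finset.univ, ?_, fun v => ?_⟩
        · calc (Finset.image x Finset.univ).card ≤ Finset.univ.card :=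
              Finset.card_image_le
            _ = m := by simp
            _ ≤ gstar - 2 := hm
        · obtain ⟨i, _, hd⟩ := hx v
          exact ⟨x i, Finset.mem_image_of_mem x (Finset.mem_univ i), by omega⟩
      have := hmin (gstar - 2) (by omega) hpart
      omega
  have hub : burningNumber T ≤ 2 * gstar := Nat.sInf_le hburn
  have hlb : gstar - 1 ≤ burningNumber T := by
    by_contra h
    push_neg at h
    have hmem : burningNumber T ∈ {k | BurnsIn T k} := Nat.sInf_mem ⟨_, hburn⟩
    obtain ⟨m, hm', x, hx⟩ := hmem
    exact hnot ⟨m, by omega, x, hx⟩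
  exact ⟨hburn, hnot, hlb, hub⟩
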